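/- Bound on M_z for large effective size (Lemma 3, part b): Fix constants c > 0, L̄ > 0 and δ ∈ [0,1), and work in the asymptotic regime of the SSE model with a uniformly random input string. Then for every ε > 0, Pr( ∃ l ∈ {1,…,L(n)} and z ∈ {0,1,⊥}^l with τ_ue(z) > 1 − ε such that M_z ≥ n^{ε} ) → 0 as n → ∞. -/

import Mathlib

open Filter

noncomputable section

/-- Index family for the joint independence of starts and erasure indicators. -/
def sseType (n K L : ℕ) : Fin K ⊕ (Fin K × Fin L) → Type
  | .inl _ => ZMod n
  | .inr _ => Bool

/-- Measurable-space structure on the index family (discrete σ-algebras). -/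
def sseTypeMS (n K L : ℕ) : ∀ t : Fin K ⊕ (Fin K × Fin L), MeasurableSpace (sseType n K L t)
  | .inl _ => inferInstanceAs (MeasurableSpace (ZMod n))
  | .inr _ => inferInstanceAs (MeasurableSpace Bool)

/-- The combined family of random variables (starts and erasure indicators). -/
def sseVars {Ω : Type} {n K L : ℕ} (S : Fin K → Ω → ZMod n) (E : Fin K → Fin L → Ω → Bool) :
    ∀ t : Fin K ⊕ (Fin K × Fin L), Ω → sseType n K L t
  | .inl i => S i
  | .inr p => E p.1 p.2

/-- The shotgun-sequencing-with-erasures (SSE) probabilistic model: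
start positions `S 1, …, S K` i.i.d. uniform on `ZMod n`, erasure indicators `E i j`
i.i.d. Bernoulli(δ), with all of them jointly independent. -/
structure SSE (n K L : ℕ) (δ : ℝ) where
  Ω : Type
  [mΩ : MeasurableSpace Ω]
  μ : MeasureTheory.Measure Ω
  isProb : MeasureTheory.IsProbabilityMeasure μ
  S : Fin K → Ω → ZMod n
  E : Fin K → Fin L → Ω → Bool
  measS : ∀ i, Measurable (S i)
  measE : ∀ i j, Measurable (E i j)
  unifS : ∀ i s, μ {ω | S i ω = s} = (n : ENNReal)⁻¹
  bernE : ∀ i j, μ {ω | E i j ω = true} = ENNReal.ofReal δ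
  indep : ProbabilityTheory.iIndepFun (m := sseTypeMS n K L) (sseVars S E) μ

attribute [instance] SSE.mΩ
attribute [instance] SSE.isProb

/-- SSE model together with a uniformly random input string, independent of the
starts and erasures. -/
structure SSEX (n K L : ℕ) (δ : ℝ) extends SSE n K L δ where
  X : Ω → (ZMod n → Bool)
  measX : Measurable X
  unifX : ∀ v : ZMod n → Bool, μ {ω | X ω = v} = ((2 : ENNReal) ^ n)⁻¹
  indepX : ProbabilityTheory.IndepFun X (fun ω => (fun i => S i ω, fun i j => E i j ω)) μ

/-- SSE model together with a uniformly random message `W` on `{1,…,Mn}`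
(modelled as `Fin Mn`), independent of the starts and erasures. -/
structure SSEW (n K L : ℕ) (δ : ℝ) (Mn : ℕ) extends SSE n K L δ where
  W : Ω → Fin Mn
  measW : Measurable W
  unifW : ∀ w, μ {ω | W ω = w} = (Mn : ENNReal)⁻¹
  indepW : ProbabilityTheory.IndepFun W (fun ω => (fun i => S i ω, fun i j => E i j ω)) μ

variable {n K L : ℕ} {δ : ℝ}

/-- Read `i`: the `L`-length cyclic substring of `x` starting at `S i`, with erased
symbols replaced by `none` (= ⊥). -/
def SSE.read (M : SSE n K L δ) (x : ZMod n → Bool) (ω : M.Ω) (i : Fin K) :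
    Fin L → Option Bool :=
  fun j => if M.E i j ω then none else some (x (M.S i ω + ((j : ℕ) : ZMod n)))

/-- The channel output: the multiset of the `K` reads. -/
def SSE.output (M : SSE n K L δ) (x : ZMod n → Bool) (ω : M.Ω) :
    Multiset (Fin L → Option Bool) :=
  Finset.univ.val.map (M.read x ω)

/-- Position `m` is visibly covered: some read covers it with an unerased symbol. -/
def SSE.VisiblyCovered (M : SSE n K L δ) (ω : M.Ω) (m : ZMod n) : Prop :=
  ∃ (i : Fin K) (j : Fin L), M.S i ω + ((j : ℕ) : ZMod n) = m ∧ M.E i j ω = false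

/-- The number 𝒫 of visibly covered positions. -/
def SSE.coveredCount (M : SSE n K L δ) (ω : M.Ω) : ℕ :=
  Set.ncard {m : ZMod n | M.VisiblyCovered ω m}

/-- The visible coverage Φ_v: the fraction of the `n` positions that are visibly covered. -/
def SSE.Phi (M : SSE n K L δ) (ω : M.Ω) : ℝ := (M.coveredCount ω : ℝ) / n

/-- The number of true islands: the number of reads `i` such that no other read `j`
has its start in the cyclic window `{S i, S i + 1, …, S i + L - 1}`. -/
def SSE.trueIslandCount (M : SSE n K L δ) (ω : M.Ω) : ℕ :=
  (Finset.univ.filter (fun i : Fin K =>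
    ∀ j : Fin K, j ≠ i → ∀ l : Fin L, M.S j ω ≠ M.S i ω + ((l : ℕ) : ZMod n))).card

/-- Cyclic distance from read `i` to read `j` in the true ordering
(reads ordered cyclically by start position, ties broken by index). -/
def SSE.dist (M : SSE n K L δ) (ω : M.Ω) (i j : Fin K) : ℕ :=
  if (M.S j ω - M.S i ω).val = 0 then (if i < j then 0 else n)
  else (M.S j ω - M.S i ω).val

/-- The cyclic gap `g_i` from the start of read `i` to the start of its true successor. -/
def SSE.trueGap (M : SSE n K L δ) (ω : M.Ω) (i : Fin K) : ℕ :=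
  if h : (Finset.univ.erase i).Nonempty then
    ((Finset.univ.erase i).image (fun j => M.dist ω i j)).min' (h.image _)
  else n

/-- The true overlap `o_i = max (0, L − g_i)` of read `i` with its true successor. -/
def SSE.trueOverlap (M : SSE n K L δ) (ω : M.Ω) (i : Fin K) : ℕ := L - M.trueGap ω i

/-- The true merging suffix size `ω^t_i`: the number of unerased symbols among the last
`o_i` symbols of read `i` (`0` if `o_i = 0`). -/
def SSE.suffixSize (M : SSE n K L δ) (ω : M.Ω) (i : Fin K) : ℕ :=
  (Finset.univ.filter (fun j : Fin L =>
    L - M.trueOverlap ω i ≤ (j : ℕ) ∧ M.E i j ω = false)).card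

open Classical in
/-- `G(τ)`: the number of reads whose true merging suffix size equals `τ·log₂ n`. -/
def SSE.G (M : SSE n K L δ) (ω : M.Ω) (τ : ℝ) : ℕ :=
  (Finset.univ.filter (fun i : Fin K =>
    (M.suffixSize ω i : ℝ) = τ * Real.logb 2 n)).card

/-- Read length in the asymptotic regime: `L(n) = ⌈Lbar log₂ n⌉`. -/
def Lof (Lbar : ℝ) (n : ℕ) : ℕ := ⌈Lbar * Real.logb 2 n⌉₊

/-- Number of reads in the asymptotic regime: `K(n) = ⌈c n / L(n)⌉`. -/
def Kof (c Lbar : ℝ) (n : ℕ) : ℕ := ⌈c * (n : ℝ) / (Lof Lbar n : ℝ)⌉₊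

/-- `z` (a string with erasures, `none` = ⊥) matches `x` at position `s`: every unerased
symbol of `z` agrees with the corresponding (cyclic) symbol of `x`. -/
def ZMatches {n : ℕ} (x : ZMod n → Bool) {l : ℕ} (z : Fin l → Option Bool)
    (s : ZMod n) : Prop :=
  ∀ (j : Fin l) (b : Bool), z j = some b → x (s + ((j : ℕ) : ZMod n)) = b

open Classical in
/-- `M_z`: the number of reads whose window matches `z`. -/
def SSEX.Mz (M : SSEX n K L δ) (ω : M.Ω) {l : ℕ} (z : Fin l → Option Bool) : ℕ :=
  (Finset.univ.filter (fun i : Fin K => ZMatches (M.X ω) z (M.S i ω))).card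

/-- `size(z)`: the number of unerased symbols of `z`. -/
def sizeZ {l : ℕ} (z : Fin l → Option Bool) : ℕ :=
  (Finset.univ.filter (fun j : Fin l => z j ≠ none)).card

/-- `τ_ue(z) = size(z) / log₂ n`. -/
def tauUE (n : ℕ) {l : ℕ} (z : Fin l → Option Bool) : ℝ :=
  (sizeZ z : ℝ) / Real.logb 2 n

/-- The probability of a decoding error for a given encoder/decoder pair, when the
transmitted codeword is `enc W`. -/
def SSEW.errProb {n K L : ℕ} {δ : ℝ} {Mn : ℕ} (M : SSEW n K L δ Mn)
    (enc : Fin Mn → (ZMod n → Bool))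
    (dec : Multiset (Fin L → Option Bool) → Fin Mn) : ℝ :=
  (M.μ {ω | dec (M.toSSE.output (enc (M.W ω)) ω) ≠ M.W ω}).toReal

/-- The β(d) penalty function, with `α = c/(Lbar(1−δ))`. -/
def betaFn (c Lbar δ : ℝ) (d : ℝ) : ℝ :=
  (d / (1 - δ)) * (c / Lbar) ^ 2 * Real.exp (-c) *
    (Real.exp (c / (Lbar * (1 - δ)) * d) * (Real.exp (c / (Lbar * (1 - δ))) - 1) /
        (Real.exp (c / (Lbar * (1 - δ)) * d) - 1) -
      Real.exp (2 * (c / (Lbar * (1 - δ))) * d) *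
          ((Real.exp (c / (Lbar * (1 - δ)) * (1 + d)) - Real.exp (c / (Lbar * (1 - δ)))) -
            d * (Real.exp (c / (Lbar * (1 - δ)) * (1 + d)) - 1)) /
        (Real.exp (c / (Lbar * (1 - δ)) * d) - 1) ^ 2)

namespace SSEB
open Finset

variable {n : ℕ}

/-- Window: the support set `J` shifted by `s`. -/
def win (J : Finset (ZMod n)) (s : ZMod n) : Finset (ZMod n) := J.image (fun j => s + j)

lemma card_win (J : Finset (ZMod n)) (s : ZMod n) : (win J s).card = J.card :=
  Finset.card_image_of_injective _ (add_right_injective s)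

lemma win_inter (J U : Finset (ZMod n)) (s : ZMod n) :
    win J s ∩ U = (J.filter (fun j => s + j ∈ U)).image (fun j => s + j) := by
  ext x
  simp only [win, Finset.mem_inter, Finset.mem_image, Finset.mem_filter]
  constructor
  · rintro ⟨⟨j, hj, rfl⟩, hx⟩; exact ⟨j, ⟨hj, hx⟩, rfl⟩
  · rintro ⟨j, ⟨hj, hx⟩, rfl⟩; exact ⟨⟨j, hj, rfl⟩, hx⟩

lemma card_win_inter (J U : Finset (ZMod n)) (s : ZMod n) :
    (win J s ∩ U).card = (J.filter (fun j => s + j ∈ U)).card := by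
  rw [win_inter]; exact Finset.card_image_of_injective _ (add_right_injective s)

lemma card_filter_add_mem [NeZero n] (j : ZMod n) (U : Finset (ZMod n)) :
    (Finset.univ.filter (fun a : ZMod n => a + j ∈ U)).card = U.card := by
  apply Finset.card_bij (fun a _ => a + j)
  · intro a ha; exact (Finset.mem_filter.1 ha).2
  · intro a _ b _ h; exact add_left_injective j h
  · intro u hu
    refine ⟨u - j, Finset.mem_filter.2 ⟨Finset.mem_univ _, by simp [hu]⟩, by simp⟩

lemma sum_card_win_inter [NeZero n] (J U : Finset (ZMod n)) :
    ∑ a : ZMod n, ((win J a ∩ U).card) = J.card * U.card := by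
  simp_rw [card_win_inter, Finset.card_filter]
  rw [Finset.sum_comm]
  have : ∀ j ∈ J, (∑ a : ZMod n, if a + j ∈ U then 1 else 0) = U.card := by
    intro j _
    rw [← Finset.card_filter]
    exact card_filter_add_mem j U
  rw [Finset.sum_congr rfl this, Finset.sum_const, smul_eq_mul]

lemma pow_half_sub_le (σ O : ℕ) (hO : O ≤ σ) :
    ((2:ℝ)⁻¹) ^ (σ - O) ≤ (2⁻¹) ^ σ + O := by
  have h2 : (0:ℝ) < 2 ^ σ := by positivity
  have hOpow : (2:ℝ) ^ O ≤ 1 + O * 2 ^ σ := by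
    rcases Nat.eq_zero_or_pos O with h | h
    · subst h; simp
    · have h1 : (2:ℝ) ^ O ≤ 2 ^ σ := by
        apply pow_le_pow_right₀ (by norm_num) hO
      have h3 : (1:ℝ) ≤ O := by exact_mod_cast h
      nlinarith
  have key : ((2:ℝ)) ^ (σ - O) * 2 ^ O = 2 ^ σ := by
    rw [← pow_add]; congr 1; omega
  have h4 : (0:ℝ) < 2 ^ (σ - O) := by positivity
  have h5 : (0:ℝ) < 2 ^ O := by positivity
  rw [inv_pow, inv_pow]
  rw [inv_le_iff_one_le_mul₀ h4]
  have expand : ((2 ^ σ:ℝ)⁻¹ + O) * 2 ^ (σ - O) * 2 ^ O = (2^σ)⁻¹ * 2^σ + O * 2^σ := by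
    rw [mul_assoc, key]; ring
  have hfin : (1:ℝ) * 2 ^ O ≤ ((2 ^ σ:ℝ)⁻¹ + O) * 2 ^ (σ - O) * 2 ^ O := by
    rw [expand, inv_mul_cancel₀ (ne_of_gt h2)]
    simpa using hOpow
  exact le_of_mul_le_mul_right (by simpa using hfin) h5

lemma sum_step [NeZero n] (J U : Finset (ZMod n)) :
    ∑ a : ZMod n, ((2:ℝ)⁻¹) ^ ((win J a \ U).card)
      ≤ n * (2⁻¹) ^ J.card + J.card * U.card := by
  have hterm : ∀ a : ZMod n, ((2:ℝ)⁻¹) ^ ((win J a \ U).card)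
      ≤ (2⁻¹) ^ J.card + ((win J a ∩ U).card : ℝ) := by
    intro a
    have h1 : (win J a \ U).card = J.card - (win J a ∩ U).card := by
      have h := Finset.card_sdiff_add_card_inter (win J a) U
      have h2 := card_win J a
      omega
    have h3 : (win J a ∩ U).card ≤ J.card := by
      have h := Finset.card_sdiff_add_card_inter (win J a) U
      have h2 := card_win J a
      omega
    rw [h1]
    exact pow_half_sub_le _ _ h3
  calc ∑ a : ZMod n, ((2:ℝ)⁻¹) ^ ((win J a \ U).card)
      ≤ ∑ a : ZMod n, ((2⁻¹:ℝ) ^ J.card + ((win J a ∩ U).card : ℝ)) :=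
        Finset.sum_le_sum (fun a _ => hterm a)
    _ = n * (2⁻¹) ^ J.card + J.card * U.card := by
        rw [Finset.sum_add_distrib, Finset.sum_const, Finset.card_univ, ZMod.card,
          nsmul_eq_mul, ← Nat.cast_sum _ _, sum_card_win_inter]
        push_cast
        ring

/-- Union of windows over a tuple of positions. -/
def cov (J : Finset (ZMod n)) {m : ℕ} (p : Fin m → ZMod n) : Finset (ZMod n) :=
  Finset.univ.biUnion (fun k => win J (p k))

lemma cov_zero (J : Finset (ZMod n)) (p : Fin 0 → ZMod n) : cov J p = ∅ := by
  simp [cov]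

lemma cov_succ {m : ℕ} (J : Finset (ZMod n)) (a : ZMod n) (p : Fin m → ZMod n) :
    cov J (Fin.cons a p) = win J a ∪ cov J p := by
  ext x
  simp only [cov, Finset.mem_biUnion, Finset.mem_univ, true_and, Finset.mem_union]
  rw [Fin.exists_fin_succ]
  simp [Fin.cons_succ]

lemma card_cov_le {m : ℕ} (J : Finset (ZMod n)) (p : Fin m → ZMod n) :
    (cov J p).card ≤ m * J.card := by
  refine le_trans (Finset.card_biUnion_le) ?_
  have h : ∀ k : Fin m, (win J (p k)).card = J.card := fun k => card_win J (p k)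
  simp only [h, Finset.sum_const, Finset.card_univ, Fintype.card_fin, smul_eq_mul]
  exact le_rfl

lemma sum_pow_cov [NeZero n] (J : Finset (ZMod n)) (m : ℕ) :
    ∑ p : Fin m → ZMod n, ((2:ℝ)⁻¹) ^ ((cov J p).card)
      ≤ ((n:ℝ) * (2⁻¹) ^ J.card + (J.card:ℝ)^2 * m) ^ m := by
  induction m with
  | zero =>
      simp [cov_zero]
  | succ m ih =>
      set σ := J.card with hσ
      set A : ℝ := (n:ℝ) * (2⁻¹) ^ σ + (σ:ℝ)^2 * m with hA
      set A' : ℝ := (n:ℝ) * (2⁻¹) ^ σ + (σ:ℝ)^2 * (m+1 : ℕ) with hA'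
      have hAA' : A ≤ A' := by
        rw [hA, hA']
        have : (σ:ℝ)^2 * m ≤ (σ:ℝ)^2 * (m+1:ℕ) := by
          apply mul_le_mul_of_nonneg_left _ (by positivity)
          exact_mod_cast Nat.le_succ m
        linarith
      have hA0 : 0 ≤ A := by positivity
      have hA'0 : 0 ≤ A' := le_trans hA0 hAA'
      have hre : ∑ p : Fin (m+1) → ZMod n, ((2:ℝ)⁻¹) ^ ((cov J p).card)
          = ∑ a : ZMod n, ∑ p : Fin m → ZMod n, ((2:ℝ)⁻¹) ^ ((cov J (Fin.cons a p)).card) := by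
        rw [← Equiv.sum_comp (Fin.consEquiv (fun _ : Fin (m+1) => ZMod n))
          (fun p => ((2:ℝ)⁻¹) ^ ((cov J p).card)), Fintype.sum_prod_type]
        rfl
      rw [hre]
      have hterm : ∀ a : ZMod n, ∀ p : Fin m → ZMod n,
          ((2:ℝ)⁻¹) ^ ((cov J (Fin.cons a p)).card)
            = ((2:ℝ)⁻¹) ^ ((cov J p).card) * ((2:ℝ)⁻¹) ^ ((win J a \ cov J p).card) := by
        intro a p
        rw [cov_succ]
        have : (win J a ∪ cov J p).card = (win J a \ cov J p).card + (cov J p).card :=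
          (Finset.card_sdiff_add_card _ _).symm
        rw [this, pow_add]
        ring
      calc ∑ a : ZMod n, ∑ p : Fin m → ZMod n, ((2:ℝ)⁻¹) ^ ((cov J (Fin.cons a p)).card)
          = ∑ p : Fin m → ZMod n, ∑ a : ZMod n,
              ((2:ℝ)⁻¹) ^ ((cov J p).card) * ((2:ℝ)⁻¹) ^ ((win J a \ cov J p).card) := by
            rw [Finset.sum_comm]
            exact Finset.sum_congr rfl (fun p _ => Finset.sum_congr rfl
              (fun a _ => hterm a p))
        _ ≤ ∑ p : Fin m → ZMod n, ((2:ℝ)⁻¹) ^ ((cov J p).card) * A' := by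
            apply Finset.sum_le_sum
            intro p _
            rw [← Finset.mul_sum]
            apply mul_le_mul_of_nonneg_left _ (by positivity)
            refine le_trans (sum_step J (cov J p)) ?_
            rw [hA']
            have h1 : ((cov J p).card : ℝ) ≤ m * σ := by
              exact_mod_cast card_cov_le J p
            have h2 : (J.card : ℝ) * (cov J p).card ≤ (σ:ℝ)^2 * (m+1:ℕ) := by
              rw [← hσ]
              calc (σ:ℝ) * (cov J p).card ≤ (σ:ℝ) * (m * σ) := by
                    apply mul_le_mul_of_nonneg_left h1 (by positivity)
                _ ≤ (σ:ℝ)^2 * (m+1:ℕ) := by push_cast; nlinarith [sq_nonneg (σ:ℝ)]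
            rw [← hσ]
            linarith
        _ = A' * ∑ p : Fin m → ZMod n, ((2:ℝ)⁻¹) ^ ((cov J p).card) := by
            rw [← Finset.sum_mul]; ring
        _ ≤ A' * A ^ m := by
            apply mul_le_mul_of_nonneg_left ih hA'0
        _ ≤ A' * A' ^ m := by
            apply mul_le_mul_of_nonneg_left (pow_le_pow_left₀ hA0 hAA' m) hA'0
        _ = A' ^ (m+1) := by rw [pow_succ]; ring

end SSEB
namespace SSEB2
open Finset

lemma descFactorial_lower (q : ℕ) : ∀ T m : ℕ, T ≤ m → (T + 1 - q)^q ≤ m.descFactorial q := by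
  induction q with
  | zero => intro T m _; simp
  | succ q ih =>
      intro T m hTm
      rw [Nat.descFactorial_succ]
      calc (T + 1 - (q+1))^(q+1) = (T - q)^(q+1) := by congr 1; omega
        _ = (T - q) * (T - q)^q := by rw [pow_succ]; ring
        _ ≤ (m - q) * (T + 1 - q)^q :=
            Nat.mul_le_mul (by omega) (Nat.pow_le_pow_left (by omega) q)
        _ ≤ (m - q) * m.descFactorial q :=
            Nat.mul_le_mul_left _ (ih T m hTm)

lemma markov_count {F : Type} [Fintype F] {K q T' : ℕ}
    (P : F → Fin K → Prop) [∀ y i, Decidable (P y i)] :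
    (T' + 1 - q)^q * (Finset.univ.filter (fun y : F =>
        T' ≤ (Finset.univ.filter (fun i => P y i)).card)).card
      ≤ ∑ t : Fin q ↪ Fin K, (Finset.univ.filter (fun y : F => ∀ k, P y (t k))).card := by
  classical
  have swap : ∑ t : Fin q ↪ Fin K, (Finset.univ.filter (fun y : F => ∀ k, P y (t k))).card
      = ∑ y : F, (Finset.univ.filter (fun t : Fin q ↪ Fin K => ∀ k, P y (t k))).card := by
    simp_rw [Finset.card_filter]
    exact Finset.sum_comm
  rw [swap]
  have perY : ∀ y : F, T' ≤ (Finset.univ.filter (fun i => P y i)).card →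
      (T' + 1 - q)^q ≤ (Finset.univ.filter (fun t : Fin q ↪ Fin K => ∀ k, P y (t k))).card := by
    intro y hy
    set My := Finset.univ.filter (fun i => P y i) with hMy
    have hcard : Fintype.card (Fin q ↪ {i // i ∈ My}) = My.card.descFactorial q := by
      rw [Fintype.card_embedding_eq, Fintype.card_coe, Fintype.card_fin]
    have hinj : (Finset.univ : Finset (Fin q ↪ {i // i ∈ My})).card
        ≤ (Finset.univ.filter (fun t : Fin q ↪ Fin K => ∀ k, P y (t k))).card := by
      apply Finset.card_le_card_of_injOn
        (fun e => e.trans (Function.Embedding.subtype _))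
      · intro e _
        simp only [Finset.mem_coe, Finset.mem_filter, Finset.mem_univ, true_and]
        intro k
        have h2 := (e k).2
        simp only [hMy, Finset.mem_filter, Finset.mem_univ, true_and] at h2
        simpa using h2
      · intro e₁ _ e₂ _ h
        apply DFunLike.ext
        intro k
        have hk := DFunLike.congr_fun h k
        simp only [Function.Embedding.trans_apply, Function.Embedding.coe_subtype] at hk
        exact Subtype.ext hk
    calc (T' + 1 - q)^q ≤ My.card.descFactorial q := descFactorial_lower _ _ _ hy
      _ = (Finset.univ : Finset (Fin q ↪ {i // i ∈ My})).card := by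
          rw [Finset.card_univ, hcard]
      _ ≤ _ := hinj
  calc (T' + 1 - q)^q * (Finset.univ.filter (fun y : F =>
        T' ≤ (Finset.univ.filter (fun i => P y i)).card)).card
      = ∑ _y ∈ Finset.univ.filter (fun y : F =>
          T' ≤ (Finset.univ.filter (fun i => P y i)).card), (T' + 1 - q)^q := by
        rw [Finset.sum_const, smul_eq_mul, mul_comm]
    _ ≤ ∑ y ∈ Finset.univ.filter (fun y : F =>
          T' ≤ (Finset.univ.filter (fun i => P y i)).card),
          (Finset.univ.filter (fun t : Fin q ↪ Fin K => ∀ k, P y (t k))).card :=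
        Finset.sum_le_sum (fun y hy => perY y (Finset.mem_filter.1 hy).2)
    _ ≤ ∑ y : F, (Finset.univ.filter (fun t : Fin q ↪ Fin K => ∀ k, P y (t k))).card :=
        Finset.sum_le_sum_of_subset (Finset.filter_subset _ _)

end SSEB2

namespace SSEB

variable {n : ℕ}

/-- The support of `z` viewed inside `ZMod n`. -/
def Jset (n : ℕ) {l : ℕ} (z : Fin l → Option Bool) : Finset (ZMod n) :=
  (Finset.univ.filter (fun j : Fin l => z j ≠ none)).image (fun j => (((j : Fin l) : ℕ) : ZMod n))

lemma card_Jset [NeZero n] {l : ℕ} (hln : l ≤ n) (z : Fin l → Option Bool) :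
    (Jset n z).card = sizeZ z := by
  rw [Jset, sizeZ]
  apply Finset.card_image_of_injOn
  intro j₁ _ j₂ _ h
  have h1 : ((j₁ : ℕ) : ZMod n).val = j₁ := ZMod.val_cast_of_lt (lt_of_lt_of_le j₁.2 hln)
  have h2 : ((j₂ : ℕ) : ZMod n).val = j₂ := ZMod.val_cast_of_lt (lt_of_lt_of_le j₂.2 hln)
  have h' : (((j₁ : ℕ)) : ZMod n) = ((j₂ : ℕ) : ZMod n) := h
  apply Fin.ext
  rw [← h1, ← h2, h']

open Classical in
/-- The number of matching reads as a function of the pair (starts, input). -/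
noncomputable def Nmatch {K l : ℕ} (z : Fin l → Option Bool)
    (y : (Fin K → ZMod n) × (ZMod n → Bool)) : ℕ :=
  (Finset.univ.filter (fun i : Fin K => ZMatches y.2 z (y.1 i))).card

open Classical in
lemma fiber_le [NeZero n] {K l q : ℕ} (hq : q ≤ K) (z : Fin l → Option Bool)
    (t : Fin q ↪ Fin K) (p' : Fin q → ZMod n) :
    (Finset.univ.filter (fun y : (Fin K → ZMod n) × (ZMod n → Bool) =>
        (∀ k, ZMatches y.2 z (y.1 (t k))) ∧ y.1 ∘ t = p')).card
      ≤ n ^ (K - q) * 2 ^ (n - (cov (Jset n z) p').card) := by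
  classical
  set U := cov (Jset n z) p' with hU
  set R : Finset (Fin K) := Finset.univ.map t with hR
  have hcard : Fintype.card (({i : Fin K // i ∉ R} → ZMod n) × ({u : ZMod n // u ∉ U} → Bool))
      = n ^ (K - q) * 2 ^ (n - U.card) := by
    rw [Fintype.card_prod, Fintype.card_fun, Fintype.card_fun, ZMod.card, Fintype.card_bool]
    congr 2
    · rw [Fintype.card_subtype_compl, Fintype.card_fin, Fintype.card_coe, hR,
        Finset.card_map, Finset.card_univ, Fintype.card_fin]
    · rw [Fintype.card_subtype_compl, ZMod.card, Fintype.card_coe]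
  rw [← hcard, ← Fintype.card_coe]
  let Φ : {x // x ∈ Finset.univ.filter (fun y : (Fin K → ZMod n) × (ZMod n → Bool) =>
      (∀ k, ZMatches y.2 z (y.1 (t k))) ∧ y.1 ∘ t = p')} →
      ({i : Fin K // i ∉ R} → ZMod n) × ({u : ZMod n // u ∉ U} → Bool) :=
    fun y => (fun i => y.1.1 i.1, fun u => y.1.2 u.1)
  apply Fintype.card_le_of_injective Φ
  intro y₁ y₂ h
  have h1 : (fun i : {i : Fin K // i ∉ R} => y₁.1.1 i.1) = (fun i => y₂.1.1 i.1) :=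
    congrArg Prod.fst h
  have h2 : (fun u : {u : ZMod n // u ∉ U} => y₁.1.2 u.1) = (fun u => y₂.1.2 u.1) :=
    congrArg Prod.snd h
  have hy₁ := (Finset.mem_filter.1 y₁.2).2
  have hy₂ := (Finset.mem_filter.1 y₂.2).2
  apply Subtype.ext
  apply Prod.ext
  · funext i
    by_cases hi : i ∈ R
    · rw [hR, Finset.mem_map] at hi
      obtain ⟨k, -, rfl⟩ := hi
      have e1 : y₁.1.1 (t k) = p' k := congrFun hy₁.2 k
      have e2 : y₂.1.1 (t k) = p' k := congrFun hy₂.2 k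
      rw [e1, e2]
    · exact congrFun h1 ⟨i, hi⟩
  · funext u
    by_cases hu : u ∈ U
    · rw [hU, cov, Finset.mem_biUnion] at hu
      obtain ⟨k, -, hk⟩ := hu
      rw [win, Finset.mem_image] at hk
      obtain ⟨j, hj, hju⟩ := hk
      rw [Jset, Finset.mem_image] at hj
      obtain ⟨j₀, hj₀, rfl⟩ := hj
      have hz : z j₀ ≠ none := (Finset.mem_filter.1 hj₀).2
      obtain ⟨b, hb⟩ := Option.ne_none_iff_exists'.1 hz
      have e1 : y₁.1.1 (t k) = p' k := congrFun hy₁.2 k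
      have e2 : y₂.1.1 (t k) = p' k := congrFun hy₂.2 k
      have v1 : y₁.1.2 u = b := by
        rw [← hju]
        have := hy₁.1 k j₀ b hb
        rwa [e1] at this
      have v2 : y₂.1.2 u = b := by
        rw [← hju]
        have := hy₂.1 k j₀ b hb
        rwa [e2] at this
      rw [v1, v2]
    · exact congrFun h2 ⟨u, hu⟩

open Classical in
lemma tuple_le [NeZero n] {K l q : ℕ} (hq : q ≤ K) (z : Fin l → Option Bool)
    (t : Fin q ↪ Fin K) :
    (Finset.univ.filter (fun y : (Fin K → ZMod n) × (ZMod n → Bool) =>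
        ∀ k, ZMatches y.2 z (y.1 (t k)))).card
      ≤ ∑ p' : Fin q → ZMod n, n ^ (K - q) * 2 ^ (n - (cov (Jset n z) p').card) := by
  classical
  rw [Finset.card_eq_sum_card_fiberwise
    (f := fun y : (Fin K → ZMod n) × (ZMod n → Bool) => y.1 ∘ t)
    (t := Finset.univ) (fun _ _ => Finset.mem_univ _)]
  apply Finset.sum_le_sum
  intro p' _
  rw [Finset.filter_filter]
  exact fiber_le hq z t p'

open Classical in
lemma natMain [NeZero n] {K l q T' : ℕ} (hq : q ≤ K) (z : Fin l → Option Bool) :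
    (T' + 1 - q)^q * (Finset.univ.filter (fun y : (Fin K → ZMod n) × (ZMod n → Bool) =>
        T' ≤ Nmatch z y)).card
      ≤ K^q * ∑ p' : Fin q → ZMod n, n ^ (K - q) * 2 ^ (n - (cov (Jset n z) p').card) := by
  classical
  have step1 : (T' + 1 - q)^q * (Finset.univ.filter
      (fun y : (Fin K → ZMod n) × (ZMod n → Bool) => T' ≤ Nmatch z y)).card
      ≤ ∑ t : Fin q ↪ Fin K, (Finset.univ.filter
        (fun y : (Fin K → ZMod n) × (ZMod n → Bool) => ∀ k, ZMatches y.2 z (y.1 (t k)))).card := by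
    exact SSEB2.markov_count (F := (Fin K → ZMod n) × (ZMod n → Bool))
      (q := q) (T' := T') (fun y i => ZMatches y.2 z (y.1 i))
  refine le_trans step1 ?_
  calc ∑ t : Fin q ↪ Fin K, (Finset.univ.filter
        (fun y : (Fin K → ZMod n) × (ZMod n → Bool) => ∀ k, ZMatches y.2 z (y.1 (t k)))).card
      ≤ ∑ _t : Fin q ↪ Fin K, ∑ p' : Fin q → ZMod n,
          n ^ (K - q) * 2 ^ (n - (cov (Jset n z) p').card) :=
        Finset.sum_le_sum (fun t _ => tuple_le hq z t)
    _ = (Fintype.card (Fin q ↪ Fin K)) * ∑ p' : Fin q → ZMod n,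
          n ^ (K - q) * 2 ^ (n - (cov (Jset n z) p').card) := by
        rw [Finset.sum_const, Finset.card_univ, smul_eq_mul]
    _ ≤ K^q * ∑ p' : Fin q → ZMod n,
          n ^ (K - q) * 2 ^ (n - (cov (Jset n z) p').card) := by
        apply Nat.mul_le_mul_right
        rw [Fintype.card_embedding_eq, Fintype.card_fin, Fintype.card_fin]
        exact Nat.descFactorial_le_pow K q

end SSEB
namespace SSEB

lemma pow_two_sub_eq (n w : ℕ) (hw : w ≤ n) :
    (2:ℝ) ^ (n - w) = 2 ^ n * (2⁻¹) ^ w := by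
  have key : (2:ℝ) ^ (n - w) * 2 ^ w = 2 ^ n := by
    rw [← pow_add]; congr 1; omega
  have h2 : (0:ℝ) < 2 ^ w := by positivity
  rw [inv_pow, eq_mul_inv_iff_mul_eq₀ h2.ne', key]

open Classical in
/-- The central per-`z` probability bound, in counting form over the finite space of
(start vector, input string). -/
lemma perz_prob_le {n : ℕ} [NeZero n] {K l q T' : ℕ} (hq : q ≤ K) (hD : q ≤ T')
    (z : Fin l → Option Bool) :
    ((Finset.univ.filter (fun y : (Fin K → ZMod n) × (ZMod n → Bool) =>
        T' ≤ Nmatch z y)).card : ℝ) * (((n:ℝ) ^ K)⁻¹ * ((2:ℝ) ^ n)⁻¹)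
      ≤ ((K:ℝ) * ((n:ℝ) * (2⁻¹) ^ (Jset n z).card + ((Jset n z).card : ℝ)^2 * q)
          / ((n:ℝ) * ((T' + 1 - q : ℕ) : ℝ)))^q := by
  have hn0 : 0 < n := Nat.pos_of_ne_zero (NeZero.ne n)
  have hnR : (0:ℝ) < n := by exact_mod_cast hn0
  set σ := (Jset n z).card with hσ
  set A : ℝ := (n:ℝ) * (2⁻¹) ^ σ + (σ:ℝ)^2 * q with hA
  set D : ℕ := T' + 1 - q with hDdef
  have hD1 : 1 ≤ D := by omega
  have hDR : (0:ℝ) < (D:ℝ) := by exact_mod_cast hD1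
  have hA0 : (0:ℝ) ≤ A := by positivity
  set N : ℕ := (Finset.univ.filter (fun y : (Fin K → ZMod n) × (ZMod n → Bool) =>
      T' ≤ Nmatch z y)).card with hN
  -- natural-number main inequality
  have hnat : D ^ q * N ≤ K ^ q * ∑ p' : Fin q → ZMod n,
      n ^ (K - q) * 2 ^ (n - (cov (Jset n z) p').card) := by
    rw [hDdef, hN]
    exact natMain hq z
  -- cast and bound the sum
  have hw : ∀ p' : Fin q → ZMod n, (cov (Jset n z) p').card ≤ n := by
    intro p'
    calc (cov (Jset n z) p').card ≤ (Finset.univ : Finset (ZMod n)).card :=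
          Finset.card_le_univ _
      _ = n := by rw [Finset.card_univ, ZMod.card]
  have hsum : ((∑ p' : Fin q → ZMod n,
      n ^ (K - q) * 2 ^ (n - (cov (Jset n z) p').card) : ℕ) : ℝ)
      ≤ (n:ℝ) ^ (K - q) * (2:ℝ) ^ n * A ^ q := by
    push_cast
    calc ∑ p' : Fin q → ZMod n, (n:ℝ) ^ (K - q) * (2:ℝ) ^ (n - (cov (Jset n z) p').card)
        = (n:ℝ) ^ (K - q) * ∑ p' : Fin q → ZMod n, (2:ℝ) ^ (n - (cov (Jset n z) p').card) := by
          rw [Finset.mul_sum]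
      _ = (n:ℝ) ^ (K - q) * ((2:ℝ)^n * ∑ p' : Fin q → ZMod n,
            ((2:ℝ)⁻¹) ^ ((cov (Jset n z) p').card)) := by
          congr 1
          rw [Finset.mul_sum]
          exact Finset.sum_congr rfl (fun p' _ => pow_two_sub_eq n _ (hw p'))
      _ ≤ (n:ℝ) ^ (K - q) * ((2:ℝ)^n * A^q) := by
          apply mul_le_mul_of_nonneg_left _ (by positivity)
          apply mul_le_mul_of_nonneg_left _ (by positivity)
          exact sum_pow_cov (Jset n z) q
      _ = (n:ℝ) ^ (K - q) * (2:ℝ) ^ n * A ^ q := by ring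
  have hcast : (N:ℝ) * (D:ℝ) ^ q ≤ (K:ℝ)^q * ((n:ℝ) ^ (K - q) * (2:ℝ) ^ n * A ^ q) := by
    have h1 : ((D ^ q * N : ℕ) : ℝ) ≤ ((K ^ q : ℕ):ℝ) * ((∑ p' : Fin q → ZMod n,
        n ^ (K - q) * 2 ^ (n - (cov (Jset n z) p').card) : ℕ) : ℝ) := by
      exact_mod_cast hnat
    calc (N:ℝ) * (D:ℝ)^q = ((D^q * N : ℕ) : ℝ) := by push_cast; ring
      _ ≤ ((K ^ q : ℕ):ℝ) * _ := h1
      _ ≤ ((K ^ q : ℕ):ℝ) * ((n:ℝ) ^ (K - q) * (2:ℝ) ^ n * A ^ q) :=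
          mul_le_mul_of_nonneg_left hsum (by positivity)
      _ = (K:ℝ)^q * ((n:ℝ) ^ (K - q) * (2:ℝ) ^ n * A ^ q) := by push_cast; ring
  have hnn : (n:ℝ) ^ (K - q) * (n:ℝ) ^ q = (n:ℝ) ^ K := by
    rw [← pow_add]; congr 1; omega
  -- final algebra
  rw [div_pow, mul_pow, mul_pow]
  rw [le_div_iff₀ (by positivity)]
  calc (N:ℝ) * (((n:ℝ) ^ K)⁻¹ * ((2:ℝ) ^ n)⁻¹) * ((n:ℝ)^q * (D:ℝ)^q)
      = ((N:ℝ) * (D:ℝ)^q) * ((n:ℝ)^q * ((n:ℝ)^K)⁻¹ * ((2:ℝ)^n)⁻¹) := by ring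
    _ ≤ ((K:ℝ)^q * ((n:ℝ) ^ (K - q) * (2:ℝ) ^ n * A ^ q)) *
          ((n:ℝ)^q * ((n:ℝ)^K)⁻¹ * ((2:ℝ)^n)⁻¹) := by
        apply mul_le_mul_of_nonneg_right hcast (by positivity)
    _ = ((K:ℝ)^q * A^q) * (((n:ℝ)^(K-q) * (n:ℝ)^q) * ((n:ℝ)^K)⁻¹) *
          ((2:ℝ)^n * ((2:ℝ)^n)⁻¹) := by ring
    _ = (K:ℝ)^q * A^q := by
        rw [hnn, mul_inv_cancel₀ (by positivity), mul_inv_cancel₀ (by positivity)]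
        ring

end SSEB
namespace SSEB

open MeasureTheory ProbabilityTheory Finset

/-- Dependent family of singleton/univ sets used with the joint independence. -/
def psets {n K L : ℕ} (p : Fin K → ZMod n) : ∀ t : Fin K ⊕ (Fin K × Fin L), Set (sseType n K L t)
  | .inl i => {p i}
  | .inr _ => Set.univ

variable {n K L : ℕ} {δ : ℝ}

lemma meas_S_vec (M : SSEX n K L δ) (p : Fin K → ZMod n) :
    M.μ (⋂ i, M.S i ⁻¹' {p i}) = ((n : ENNReal) ^ K)⁻¹ := by
  classical
  have hiff := (ProbabilityTheory.iIndepFun_iff_measure_inter_preimage_eq_mul).1 M.indep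
  set S₀ : Finset (Fin K ⊕ (Fin K × Fin L)) :=
    Finset.univ.map ⟨Sum.inl, Sum.inl_injective⟩ with hS₀
  have hmeas : ∀ t ∈ S₀, MeasurableSet[sseTypeMS n K L t] (psets p t) := by
    intro t ht
    rw [hS₀, Finset.mem_map] at ht
    obtain ⟨i, -, rfl⟩ := ht
    exact MeasurableSpace.measurableSet_top
  have hkey := hiff S₀ hmeas
  have hset : (⋂ t ∈ S₀, sseVars M.S M.E t ⁻¹' psets p t) = ⋂ i, M.S i ⁻¹' {p i} := by
    ext ω
    simp only [Set.mem_iInter, Set.mem_preimage]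
    constructor
    · intro h i
      have := h (Sum.inl i) (by simp [hS₀])
      exact this
    · intro h t ht
      rw [hS₀, Finset.mem_map] at ht
      obtain ⟨i, -, rfl⟩ := ht
      exact h i
  rw [hset] at hkey
  rw [hkey, hS₀, Finset.prod_map]
  have : ∀ i : Fin K, M.μ (sseVars M.S M.E (Sum.inl i) ⁻¹' psets p (Sum.inl i))
      = (n : ENNReal)⁻¹ := by
    intro i
    have : sseVars M.S M.E (Sum.inl i) ⁻¹' psets p (Sum.inl i) = {ω | M.S i ω = p i} := by
      ext ω; simp [sseVars, psets]; exact Iff.rfl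
    rw [this, M.unifS]
  simp only [Function.Embedding.coeFn_mk, this, Finset.prod_const, Finset.card_univ,
    Fintype.card_fin]
  rw [← ENNReal.inv_pow]

lemma meas_point [NeZero n] (M : SSEX n K L δ) (p : Fin K → ZMod n) (v : ZMod n → Bool) :
    M.μ {ω | (∀ i, M.S i ω = p i) ∧ M.X ω = v}
      = ((n : ENNReal) ^ K)⁻¹ * ((2 : ENNReal) ^ n)⁻¹ := by
  classical
  have hBmeas : MeasurableSet {se : (Fin K → ZMod n) × (Fin K → Fin L → Bool) |
      ∀ i, se.1 i = p i} := by
    have : {se : (Fin K → ZMod n) × (Fin K → Fin L → Bool) | ∀ i, se.1 i = p i}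
        = ⋂ i, (fun se : (Fin K → ZMod n) × (Fin K → Fin L → Bool) => se.1 i) ⁻¹' {p i} := by
      ext se; simp
    rw [this]
    exact MeasurableSet.iInter fun i =>
      ((measurable_pi_apply i).comp measurable_fst) (measurableSet_singleton _)
  have hvmeas : MeasurableSet ({v} : Set (ZMod n → Bool)) := by
    have : ({v} : Set (ZMod n → Bool)) = ⋂ u, (fun f : ZMod n → Bool => f u) ⁻¹' {v u} := by
      ext f
      simp only [Set.mem_singleton_iff, Set.mem_iInter, Set.mem_preimage]
      constructor
      · rintro rfl u; rfl
      · intro h; funext u; exact h u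
    rw [this]
    exact MeasurableSet.iInter fun u => (measurable_pi_apply u) (measurableSet_singleton _)
  have split : {ω | (∀ i, M.S i ω = p i) ∧ M.X ω = v}
      = M.X ⁻¹' {v} ∩ (fun ω => (fun i => M.S i ω, fun i j => M.E i j ω)) ⁻¹'
          {se : (Fin K → ZMod n) × (Fin K → Fin L → Bool) | ∀ i, se.1 i = p i} := by
    ext ω
    simp only [Set.mem_setOf_eq, Set.mem_inter_iff, Set.mem_preimage, Set.mem_singleton_iff]
    tauto
  rw [split, M.indepX.measure_inter_preimage_eq_mul _ _ hvmeas hBmeas]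
  have h1 : M.μ (M.X ⁻¹' {v}) = ((2:ENNReal)^n)⁻¹ := by
    have : M.X ⁻¹' {v} = {ω | M.X ω = v} := by ext ω; simp
    rw [this, M.unifX]
  have h2 : M.μ ((fun ω => (fun i => M.S i ω, fun i j => M.E i j ω)) ⁻¹'
      {se : (Fin K → ZMod n) × (Fin K → Fin L → Bool) | ∀ i, se.1 i = p i})
      = ((n : ENNReal) ^ K)⁻¹ := by
    have : ((fun ω => (fun i => M.S i ω, fun i j => M.E i j ω)) ⁻¹'
        {se : (Fin K → ZMod n) × (Fin K → Fin L → Bool) | ∀ i, se.1 i = p i})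
        = ⋂ i, M.S i ⁻¹' {p i} := by
      ext ω; simp
    rw [this]
    exact meas_S_vec M p
  rw [h1, h2]
  ring

lemma pt_meas [NeZero n] (M : SSEX n K L δ) (p : Fin K → ZMod n) (v : ZMod n → Bool) :
    MeasurableSet {ω | (∀ i, M.S i ω = p i) ∧ M.X ω = v} := by
  have : {ω | (∀ i, M.S i ω = p i) ∧ M.X ω = v}
      = (⋂ i, M.S i ⁻¹' {p i}) ∩ M.X ⁻¹' {v} := by
    ext ω; simp [Set.mem_iInter]
  rw [this]
  refine MeasurableSet.inter (MeasurableSet.iInter fun i => M.measS i (by trivial)) ?_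
  apply M.measX
  have : ({v} : Set (ZMod n → Bool)) = ⋂ u, (fun f : ZMod n → Bool => f u) ⁻¹' {v u} := by
    ext f
    simp only [Set.mem_singleton_iff, Set.mem_iInter, Set.mem_preimage]
    constructor
    · rintro rfl u; rfl
    · intro h; funext u; exact h u
  rw [this]
  exact MeasurableSet.iInter fun u => (measurable_pi_apply u) (measurableSet_singleton _)

lemma meas_fin [NeZero n] (M : SSEX n K L δ) (A : Finset ((Fin K → ZMod n) × (ZMod n → Bool))) :
    M.μ {ω | (fun i => M.S i ω, M.X ω) ∈ A}
      = A.card * (((n : ENNReal) ^ K)⁻¹ * ((2 : ENNReal) ^ n)⁻¹) := by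
  classical
  have hdecomp : {ω | (fun i => M.S i ω, M.X ω) ∈ A}
      = ⋃ a ∈ A, {ω | (∀ i, M.S i ω = a.1 i) ∧ M.X ω = a.2} := by
    ext ω
    simp only [Set.mem_setOf_eq, Set.mem_iUnion]
    constructor
    · intro h
      exact ⟨((fun i => M.S i ω, M.X ω)), h, fun i => rfl, rfl⟩
    · rintro ⟨⟨pp, vv⟩, hA, h1, h2⟩
      have e : (fun i => M.S i ω, M.X ω) = (pp, vv) := by
        apply Prod.ext
        · exact funext h1
        · exact h2
      rwa [e]
  rw [hdecomp]
  rw [measure_biUnion_finset ?hd ?hm]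
  case hd =>
    intro a ha b hb hab
    apply Set.disjoint_left.2
    intro ω h1 h2
    apply hab
    obtain ⟨hp1, hv1⟩ := h1
    obtain ⟨hp2, hv2⟩ := h2
    apply Prod.ext
    · funext i; rw [← hp1 i, ← hp2 i]
    · rw [← hv1, ← hv2]
  case hm =>
    intro a _
    exact pt_meas M a.1 a.2
  rw [Finset.sum_congr rfl (fun a _ => meas_point M a.1 a.2), Finset.sum_const, nsmul_eq_mul]

end SSEB
namespace SSEB

open Finset MeasureTheory ProbabilityTheory Filter

lemma key_ineq {n σ : ℕ} (hn : 2 ≤ n) {ε : ℝ} (hτ : (1 - ε) * Real.logb 2 n < σ) :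
    (n:ℝ) * ((2:ℝ)⁻¹)^σ ≤ (n:ℝ) ^ (ε:ℝ) := by
  have hn1 : (1:ℝ) < (n:ℝ) := by exact_mod_cast hn.trans_lt' one_lt_two
  have hn0 : (0:ℝ) < (n:ℝ) := by linarith
  have h2σ : (n:ℝ) ^ ((1:ℝ) - ε) ≤ (2:ℝ) ^ σ := by
    have h1 : (n:ℝ) ^ ((1:ℝ) - ε) = (2:ℝ) ^ ((1 - ε) * Real.logb 2 n) := by
      rw [mul_comm, Real.rpow_mul (by norm_num : (0:ℝ) ≤ 2), Real.rpow_logb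
        (by norm_num) (by norm_num) hn0]
    rw [h1, ← Real.rpow_natCast 2 σ]
    exact Real.rpow_le_rpow_of_exponent_le one_le_two hτ.le
  have hpow : (0:ℝ) < (2:ℝ)^σ := by positivity
  have hne : (0:ℝ) < (n:ℝ)^((1:ℝ)-ε) := Real.rpow_pos_of_pos hn0 _
  rw [inv_pow]
  rw [mul_inv_le_iff₀ hpow]
  have hsum1 : (ε:ℝ) + (1 - ε) = 1 := by ring
  calc (n:ℝ) = (n:ℝ) ^ ((ε:ℝ) + (1 - ε)) := by rw [hsum1, Real.rpow_one]
    _ = (n:ℝ)^(ε:ℝ) * (n:ℝ)^((1:ℝ)-ε) := Real.rpow_add hn0 _ _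
    _ ≤ (n:ℝ)^(ε:ℝ) * (2:ℝ)^σ := by
        apply mul_le_mul_of_nonneg_left h2σ (Real.rpow_nonneg (le_of_lt hn0) _)

lemma geom3 (L : ℕ) : ∑ l ∈ Finset.Icc 1 L, (3:ℝ)^l ≤ 3^(L+1) := by
  induction L with
  | zero => simp
  | succ L ih =>
      rw [Finset.sum_Icc_succ_top (by omega : 1 ≤ L + 1)]
      have h1 : (3:ℝ)^(L+1) ≤ 3^(L+2) := by
        apply pow_le_pow_right₀ (by norm_num) (by omega)
      have h2 : (3:ℝ)^(L+1) + 3^(L+1) ≤ 3^(L+2) := by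
        have : (3:ℝ)^(L+2) = 3 * 3^(L+1) := by rw [pow_succ]; ring
        rw [this]; linarith [pow_pos (show (0:ℝ) < 3 by norm_num) (L+1)]
      linarith

lemma ev_log_le (a b C e : ℝ) (he : 0 < e) (hC : 0 < C) :
    ∀ᶠ x : ℝ in atTop, a * Real.log x + b ≤ C * x ^ (e:ℝ) := by
  have h1 : ∀ᶠ x : ℝ in atTop, a * Real.log x ≤ (C/2) * x ^ (e:ℝ) := by
    have hlo := isLittleO_log_rpow_atTop he
    have hbd := (Asymptotics.isLittleO_iff.mp hlo)
      (show (0:ℝ) < C/(2*(|a|+1)) by positivity)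
    filter_upwards [hbd, Filter.eventually_ge_atTop (1:ℝ)] with x hx hx1
    have hlog : 0 ≤ Real.log x := Real.log_nonneg hx1
    have hxe : (0:ℝ) ≤ x ^ (e:ℝ) := Real.rpow_nonneg (by linarith) e
    rw [Real.norm_eq_abs, Real.norm_eq_abs, abs_of_nonneg hlog, abs_of_nonneg hxe] at hx
    have hco : |a| * (C/(2*(|a|+1))) ≤ C/2 := by
      have ha1 : (0:ℝ) < |a| + 1 := by positivity
      have hpos2 : (0:ℝ) ≤ C/(2*(|a|+1)) := by positivity
      have key : (|a|+1) * (C/(2*(|a|+1))) = C/2 := by field_simp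
      calc |a| * (C/(2*(|a|+1))) ≤ (|a|+1) * (C/(2*(|a|+1))) := by nlinarith
        _ = C/2 := key
    calc a * Real.log x ≤ |a| * Real.log x :=
          mul_le_mul_of_nonneg_right (le_abs_self a) hlog
      _ ≤ |a| * (C/(2*(|a|+1)) * x^(e:ℝ)) := mul_le_mul_of_nonneg_left hx (abs_nonneg a)
      _ = (|a| * (C/(2*(|a|+1)))) * x^(e:ℝ) := by ring
      _ ≤ (C/2) * x^(e:ℝ) := mul_le_mul_of_nonneg_right hco hxe
  have h2 : ∀ᶠ x : ℝ in atTop, b ≤ (C/2) * x ^ (e:ℝ) := by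
    have := (tendsto_rpow_atTop he).eventually_ge_atTop (2*b/C)
    filter_upwards [this] with x hx
    have : (C/2) * (2*b/C) ≤ (C/2) * x^(e:ℝ) :=
      mul_le_mul_of_nonneg_left hx (by positivity)
    calc b = (C/2) * (2*b/C) := by field_simp
      _ ≤ (C/2) * x^(e:ℝ) := this
  filter_upwards [h1, h2] with x hx1 hx2
  linarith

end SSEB
namespace SSEB

open Finset MeasureTheory ProbabilityTheory Filter

lemma sizeZ_le {l : ℕ} (z : Fin l → Option Bool) : sizeZ z ≤ l := by
  rw [sizeZ]
  calc (Finset.univ.filter (fun j : Fin l => z j ≠ none)).card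
      ≤ (Finset.univ : Finset (Fin l)).card := Finset.card_filter_le _ _
    _ = l := by rw [Finset.card_univ, Fintype.card_fin]

lemma ofReal_const (n K : ℕ) (hn : 0 < n) :
    (((n : ENNReal) ^ K)⁻¹ * ((2 : ENNReal) ^ n)⁻¹)
      = ENNReal.ofReal ((((n:ℝ) ^ K)⁻¹ * ((2:ℝ) ^ n)⁻¹)) := by
  have h2R : (0:ℝ) < (2:ℝ)^n := by positivity
  have hnR : (0:ℝ) < (n:ℝ) := by exact_mod_cast hn
  have hnKR : (0:ℝ) < (n:ℝ)^K := by positivity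
  have e2 : ((2:ENNReal)^n) = ENNReal.ofReal ((2:ℝ)^n) := by
    rw [ENNReal.ofReal_pow (by norm_num : (0:ℝ) ≤ 2)]
    congr 1
    rw [ENNReal.ofReal_ofNat]
  have en : ((n:ENNReal)^K) = ENNReal.ofReal ((n:ℝ)^K) := by
    rw [ENNReal.ofReal_pow hnR.le, ENNReal.ofReal_natCast]
  rw [e2, en, ← ENNReal.ofReal_inv_of_pos hnKR, ← ENNReal.ofReal_inv_of_pos h2R,
    ← ENNReal.ofReal_mul (by positivity)]

variable {δ' : ℝ}

lemma Mz_eq_Nmatch {n K L : ℕ} (M : SSEX n K L δ') (ω : M.Ω) {l : ℕ}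
    (z : Fin l → Option Bool) :
    M.Mz ω z = Nmatch z (fun i => M.S i ω, M.X ω) := rfl

lemma fixed_n_bound (c Lbar δ ε : ℝ) (hc : 0 < c) (hε : 0 < ε) {n : ℕ} (h2 : 2 ≤ n)
    (M : SSEX n (Kof c Lbar n) (Lof Lbar n) δ)
    (hLn : Lof Lbar n ≤ n) (hLK : Lof Lbar n ≤ Kof c Lbar n)
    (hKle : (Kof c Lbar n : ℝ) ≤ 2 * c * n / (Lof Lbar n : ℝ))
    (h2L : 2 * (Lof Lbar n : ℝ) ≤ (n:ℝ) ^ (ε:ℝ))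
    (hL3 : ((Lof Lbar n : ℝ))^3 ≤ (n:ℝ) ^ (ε:ℝ))
    (hL48 : 48 * c ≤ (Lof Lbar n : ℝ)) :
    (M.μ {ω | ∃ l ∈ Finset.Icc 1 (Lof Lbar n), ∃ z : Fin l → Option Bool,
        1 - ε < tauUE n z ∧ (n : ℝ) ^ (ε : ℝ) ≤ (M.Mz ω z : ℝ)}).toReal
      ≤ 3 * (2⁻¹ : ℝ) ^ (Lof Lbar n) := by
  classical
  haveI : NeZero n := ⟨by omega⟩
  have hnR : (0:ℝ) < n := by positivity
  have hLvR : (0:ℝ) < (Lof Lbar n : ℝ) := lt_of_lt_of_le (by positivity) hL48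
  have hLv1 : 1 ≤ Lof Lbar n := by
    have : 0 < Lof Lbar n := by exact_mod_cast hLvR
    omega
  have hnε : (0:ℝ) < (n:ℝ) ^ (ε:ℝ) := Real.rpow_pos_of_pos hnR ε
  set T' : ℕ := ⌈(n:ℝ) ^ (ε:ℝ)⌉₊ with hT'
  have hT'ge : ((n:ℝ) ^ (ε:ℝ)) ≤ (T' : ℝ) := Nat.le_ceil _
  have h2LT : 2 * Lof Lbar n ≤ T' := by
    have : (2 * Lof Lbar n : ℝ) ≤ (T' : ℝ) := le_trans h2L hT'ge
    exact_mod_cast this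
  have hqT : Lof Lbar n ≤ T' := by omega
  -- the per-(l,z) sets
  set Bset : ∀ l : ℕ, (Fin l → Option Bool) → Set M.Ω :=
    fun l z => {ω | 1 - ε < tauUE n z ∧ (n : ℝ) ^ (ε : ℝ) ≤ (M.Mz ω z : ℝ)} with hBset
  have hsub : {ω | ∃ l ∈ Finset.Icc 1 (Lof Lbar n), ∃ z : Fin l → Option Bool,
      1 - ε < tauUE n z ∧ (n : ℝ) ^ (ε : ℝ) ≤ (M.Mz ω z : ℝ)}
      ⊆ ⋃ l ∈ Finset.Icc 1 (Lof Lbar n),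
          ⋃ z ∈ (Finset.univ : Finset (Fin l → Option Bool)), Bset l z := by
    intro ω hω
    obtain ⟨l, hl, z, hz⟩ := hω
    refine Set.mem_biUnion hl ?_
    exact Set.mem_biUnion (Finset.mem_univ z) hz
  -- per-z bound
  have hperz : ∀ l, l ∈ Finset.Icc 1 (Lof Lbar n) → ∀ z : Fin l → Option Bool,
      M.μ (Bset l z) ≤ ENNReal.ofReal ((8*c/(Lof Lbar n : ℝ))^(Lof Lbar n)) := by
    intro l hl z
    by_cases hτ : 1 - ε < tauUE n z
    · obtain ⟨hl1, hlL⟩ := Finset.mem_Icc.1 hl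
      have hn1R : (1:ℝ) < (n:ℝ) := by exact_mod_cast h2.trans_lt' one_lt_two
      have hlog : 0 < Real.logb 2 n := Real.logb_pos one_lt_two hn1R
      have hsz : (1 - ε) * Real.logb 2 n < (sizeZ z : ℝ) := by
        rw [tauUE] at hτ
        exact (lt_div_iff₀ hlog).1 hτ
      set Aev : Finset ((Fin (Kof c Lbar n) → ZMod n) × (ZMod n → Bool)) :=
        Finset.univ.filter (fun y => T' ≤ Nmatch z y) with hAev
      have hsub2 : Bset l z ⊆ {ω | (fun i => M.S i ω, M.X ω) ∈ Aev} := by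
        rintro ω ⟨-, hM⟩
        simp only [hAev, Finset.mem_filter, Finset.mem_univ, true_and, Set.mem_setOf_eq]
        rw [← Mz_eq_Nmatch M ω z]
        exact Nat.ceil_le.2 hM
      -- the real-valued bound
      have hσsize : (Jset n z).card = sizeZ z := card_Jset (le_trans hlL hLn) z
      have hσl : (Jset n z).card ≤ l := by rw [hσsize]; exact sizeZ_le z
      have hkey : (n:ℝ) * ((2:ℝ)⁻¹)^((Jset n z).card) ≤ (n:ℝ)^(ε:ℝ) := by
        apply key_ineq h2
        rw [hσsize]
        exact_mod_cast hsz
      have hA2 : (n:ℝ) * ((2:ℝ)⁻¹)^((Jset n z).card)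
          + (((Jset n z).card : ℝ))^2 * (Lof Lbar n : ℝ) ≤ 2 * (n:ℝ)^(ε:ℝ) := by
        have hσL : ((Jset n z).card : ℝ) ≤ (Lof Lbar n : ℝ) := by
          exact_mod_cast le_trans hσl hlL
        have hσ0 : (0:ℝ) ≤ ((Jset n z).card : ℝ) := by positivity
        have hsq : (((Jset n z).card : ℝ))^2 ≤ ((Lof Lbar n : ℝ))^2 := by nlinarith
        have h1 : (((Jset n z).card : ℝ))^2 * (Lof Lbar n : ℝ) ≤ ((Lof Lbar n : ℝ))^3 := by
          calc (((Jset n z).card : ℝ))^2 * (Lof Lbar n : ℝ)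
              ≤ ((Lof Lbar n : ℝ))^2 * (Lof Lbar n : ℝ) :=
                mul_le_mul_of_nonneg_right hsq (le_of_lt hLvR)
            _ = ((Lof Lbar n : ℝ))^3 := by ring
        linarith
      have hD2 : ((n:ℝ)^(ε:ℝ)) / 2 ≤ ((T' + 1 - Lof Lbar n : ℕ) : ℝ) := by
        have hn1 : T' ≤ 2 * (T' + 1 - Lof Lbar n) := by omega
        have h1 : (T':ℝ) ≤ 2 * ((T' + 1 - Lof Lbar n : ℕ):ℝ) := by exact_mod_cast hn1
        linarith
      have hDpos : (0:ℝ) < ((T' + 1 - Lof Lbar n : ℕ):ℝ) := lt_of_lt_of_le (by positivity) hD2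
      have hbase : (Kof c Lbar n : ℝ) * ((n:ℝ) * ((2:ℝ)⁻¹)^((Jset n z).card)
            + (((Jset n z).card : ℝ))^2 * (Lof Lbar n : ℝ))
            / ((n:ℝ) * ((T' + 1 - Lof Lbar n : ℕ):ℝ)) ≤ 8*c/(Lof Lbar n : ℝ) := by
        have hnum : (Kof c Lbar n : ℝ) * ((n:ℝ) * ((2:ℝ)⁻¹)^((Jset n z).card)
            + (((Jset n z).card : ℝ))^2 * (Lof Lbar n : ℝ))
            ≤ (2*c*(n:ℝ)/(Lof Lbar n : ℝ)) * (2*(n:ℝ)^(ε:ℝ)) := by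
          apply mul_le_mul hKle hA2 (by positivity) (by positivity)
        have hden : (n:ℝ) * (((1:ℝ)/2) * (n:ℝ)^(ε:ℝ)) ≤ (n:ℝ) * ((T' + 1 - Lof Lbar n : ℕ):ℝ) := by
          apply mul_le_mul_of_nonneg_left _ (by positivity)
          calc ((1:ℝ)/2) * (n:ℝ)^(ε:ℝ) = ((n:ℝ)^(ε:ℝ))/2 := by ring
            _ ≤ ((T' + 1 - Lof Lbar n : ℕ):ℝ) := hD2
        calc (Kof c Lbar n : ℝ) * ((n:ℝ) * ((2:ℝ)⁻¹)^((Jset n z).card)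
              + (((Jset n z).card : ℝ))^2 * (Lof Lbar n : ℝ))
              / ((n:ℝ) * ((T' + 1 - Lof Lbar n : ℕ):ℝ))
            ≤ ((2*c*(n:ℝ)/(Lof Lbar n : ℝ)) * (2*(n:ℝ)^(ε:ℝ)))
              / ((n:ℝ) * (((1:ℝ)/2) * (n:ℝ)^(ε:ℝ))) := by
              apply div_le_div₀ (by positivity) hnum (by positivity) hden
          _ = 8*c/(Lof Lbar n : ℝ) := by
              field_simp
              ring
      have hreal : ((Aev.card : ℝ)) * (((n:ℝ) ^ (Kof c Lbar n))⁻¹ * ((2:ℝ) ^ n)⁻¹)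
          ≤ (8*c/(Lof Lbar n : ℝ))^(Lof Lbar n) := by
        refine le_trans (perz_prob_le hLK hqT z) ?_
        exact pow_le_pow_left₀ (by positivity) hbase (Lof Lbar n)
      calc M.μ (Bset l z) ≤ M.μ {ω | (fun i => M.S i ω, M.X ω) ∈ Aev} :=
            measure_mono hsub2
        _ = Aev.card * (((n : ENNReal) ^ (Kof c Lbar n))⁻¹ * ((2 : ENNReal) ^ n)⁻¹) :=
            meas_fin M Aev
        _ = ENNReal.ofReal ((Aev.card : ℝ) * (((n:ℝ) ^ (Kof c Lbar n))⁻¹ * ((2:ℝ) ^ n)⁻¹)) := by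
            rw [ofReal_const n (Kof c Lbar n) (by omega), ← ENNReal.ofReal_natCast Aev.card,
              ← ENNReal.ofReal_mul (by positivity)]
        _ ≤ ENNReal.ofReal ((8*c/(Lof Lbar n : ℝ))^(Lof Lbar n)) :=
            ENNReal.ofReal_le_ofReal hreal
    · have hemp : Bset l z = ∅ :=
        Set.eq_empty_iff_forall_notMem.2 (fun ω hω => hτ hω.1)
      rw [hemp, measure_empty]
      exact bot_le
  -- sum everything
  have hcount : ∀ l : ℕ, (Finset.univ : Finset (Fin l → Option Bool)).card = 3^l := by
    intro l
    rw [Finset.card_univ, Fintype.card_fun, Fintype.card_option, Fintype.card_bool,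
      Fintype.card_fin]
  have hchain : M.μ {ω | ∃ l ∈ Finset.Icc 1 (Lof Lbar n), ∃ z : Fin l → Option Bool,
      1 - ε < tauUE n z ∧ (n : ℝ) ^ (ε : ℝ) ≤ (M.Mz ω z : ℝ)}
      ≤ ENNReal.ofReal (3 * (2⁻¹ : ℝ) ^ (Lof Lbar n)) := by
    calc M.μ _ ≤ M.μ (⋃ l ∈ Finset.Icc 1 (Lof Lbar n),
          ⋃ z ∈ (Finset.univ : Finset (Fin l → Option Bool)), Bset l z) := measure_mono hsub
      _ ≤ ∑ l ∈ Finset.Icc 1 (Lof Lbar n), M.μ (⋃ z ∈ (Finset.univ :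
            Finset (Fin l → Option Bool)), Bset l z) := measure_biUnion_finset_le _ _
      _ ≤ ∑ l ∈ Finset.Icc 1 (Lof Lbar n), ∑ z ∈ (Finset.univ :
            Finset (Fin l → Option Bool)), M.μ (Bset l z) :=
          Finset.sum_le_sum (fun l _ => measure_biUnion_finset_le _ _)
      _ ≤ ∑ l ∈ Finset.Icc 1 (Lof Lbar n), ∑ _z ∈ (Finset.univ :
            Finset (Fin l → Option Bool)),
            ENNReal.ofReal ((8*c/(Lof Lbar n : ℝ))^(Lof Lbar n)) :=
          Finset.sum_le_sum (fun l hl => Finset.sum_le_sum (fun z _ => hperz l hl z))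
      _ = ∑ l ∈ Finset.Icc 1 (Lof Lbar n),
            ENNReal.ofReal ((3:ℝ)^l * (8*c/(Lof Lbar n : ℝ))^(Lof Lbar n)) := by
          apply Finset.sum_congr rfl
          intro l _
          rw [Finset.sum_const, hcount l, nsmul_eq_mul]
          rw [← ENNReal.ofReal_natCast (3^l), ← ENNReal.ofReal_mul (by positivity)]
          congr 1
          push_cast
          ring
      _ = ENNReal.ofReal (∑ l ∈ Finset.Icc 1 (Lof Lbar n),
            (3:ℝ)^l * (8*c/(Lof Lbar n : ℝ))^(Lof Lbar n)) :=
          (ENNReal.ofReal_sum_of_nonneg (fun l _ => by positivity)).symm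
      _ ≤ ENNReal.ofReal (3 * (2⁻¹ : ℝ) ^ (Lof Lbar n)) := by
          apply ENNReal.ofReal_le_ofReal
          have hb : (0:ℝ) ≤ (8*c/(Lof Lbar n : ℝ))^(Lof Lbar n) := by positivity
          calc ∑ l ∈ Finset.Icc 1 (Lof Lbar n),
                (3:ℝ)^l * (8*c/(Lof Lbar n : ℝ))^(Lof Lbar n)
              = (∑ l ∈ Finset.Icc 1 (Lof Lbar n), (3:ℝ)^l)
                  * (8*c/(Lof Lbar n : ℝ))^(Lof Lbar n) := by
                rw [Finset.sum_mul]
            _ ≤ (3:ℝ)^(Lof Lbar n + 1) * (8*c/(Lof Lbar n : ℝ))^(Lof Lbar n) :=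
                mul_le_mul_of_nonneg_right (geom3 _) hb
            _ = 3 * ((3:ℝ)^(Lof Lbar n) * (8*c/(Lof Lbar n : ℝ))^(Lof Lbar n)) := by
                rw [pow_succ]; ring
            _ = 3 * (24*c/(Lof Lbar n : ℝ))^(Lof Lbar n) := by
                rw [← mul_pow]
                congr 2
                field_simp
                ring
            _ ≤ 3 * (2⁻¹ : ℝ)^(Lof Lbar n) := by
                have h1 : (24*c/(Lof Lbar n : ℝ)) ≤ 2⁻¹ := by
                  rw [div_le_iff₀ hLvR]
                  linarith
                have h0 : (0:ℝ) ≤ 24*c/(Lof Lbar n : ℝ) := by positivity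
                have := pow_le_pow_left₀ h0 h1 (Lof Lbar n)
                linarith
  refine le_trans (ENNReal.toReal_mono ENNReal.ofReal_ne_top hchain) ?_
  rw [ENNReal.toReal_ofReal (by positivity)]

end SSEB
/-- Bound on M_z for large effective size (Lemma 3, part b). -/
theorem Mz_bound_large
    (c Lbar δ : ℝ) (hc : 0 < c) (hLbar : 0 < Lbar) (hδ0 : 0 ≤ δ) (hδ1 : δ < 1)
    (model : ∀ n : ℕ, 2 ≤ n → SSEX n (Kof c Lbar n) (Lof Lbar n) δ)
    (ε : ℝ) (hε : 0 < ε) :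
    Tendsto (fun n : ℕ =>
        if h : 2 ≤ n then
          ((model n h).μ {ω | ∃ l ∈ Finset.Icc 1 (Lof Lbar n),
            ∃ z : Fin l → Option Bool,
              1 - ε < tauUE n z ∧ (n : ℝ) ^ (ε : ℝ) ≤ ((model n h).Mz ω z : ℝ)}).toReal
        else 0) atTop (nhds 0) := by
  have hlog2 : (0:ℝ) < Real.log 2 := Real.log_pos one_lt_two
  set a : ℝ := Lbar / Real.log 2 with ha
  have ha0 : 0 < a := div_pos hLbar hlog2
  have hLle : ∀ n : ℕ, 1 ≤ n → (Lof Lbar n : ℝ) ≤ a * Real.log n + 2 := by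
    intro n hn
    have hn1 : (1:ℝ) ≤ (n:ℝ) := by exact_mod_cast hn
    have hlogb0 : 0 ≤ Real.logb 2 (n:ℝ) := Real.logb_nonneg one_lt_two hn1
    have h1 : (Lof Lbar n : ℝ) < Lbar * Real.logb 2 (n:ℝ) + 1 := by
      rw [Lof]
      exact Nat.ceil_lt_add_one (by positivity)
    have h2 : Lbar * Real.logb 2 (n:ℝ) = a * Real.log n := by
      rw [ha, Real.logb]
      ring
    linarith
  have hLge : ∀ n : ℕ, Lbar * Real.logb 2 (n:ℝ) ≤ (Lof Lbar n : ℝ) := by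
    intro n
    rw [Lof]
    exact Nat.le_ceil _
  have hlogbTop : Tendsto (fun n : ℕ => Lbar * Real.logb 2 (n:ℝ)) atTop atTop := by
    apply Filter.Tendsto.const_mul_atTop hLbar
    exact (Real.tendsto_logb_atTop (by norm_num : (1:ℝ) < 2)).comp
      tendsto_natCast_atTop_atTop
  have hLofTop : Tendsto (fun n : ℕ => Lof Lbar n) atTop atTop := by
    rw [tendsto_atTop_atTop]
    intro b
    obtain ⟨N, hN⟩ := Filter.eventually_atTop.1 (hlogbTop.eventually_ge_atTop (b:ℝ))
    refine ⟨N, fun n hn => ?_⟩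
    have hb : (b:ℝ) ≤ (Lof Lbar n : ℝ) := le_trans (hN n hn) (hLge n)
    exact_mod_cast hb
  have hev1 := SSEB.ev_log_le a 2 1 1 one_pos one_pos
  have hev2 := SSEB.ev_log_le a 2 (Real.sqrt c) (1/2) (by norm_num) (Real.sqrt_pos.2 hc)
  have hev3 := SSEB.ev_log_le (2*a) 4 1 ε hε one_pos
  have hev4 := SSEB.ev_log_le a 2 1 (ε/3) (by positivity) one_pos
  have hcomp := tendsto_natCast_atTop_atTop (R := ℝ)
  have hevN : ∀ᶠ n : ℕ in atTop,
      2 ≤ n ∧ (Lof Lbar n ≤ n) ∧ (Lof Lbar n ≤ Kof c Lbar n) ∧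
      ((Kof c Lbar n : ℝ) ≤ 2*c*(n:ℝ)/(Lof Lbar n : ℝ)) ∧
      (2 * (Lof Lbar n : ℝ) ≤ (n:ℝ)^(ε:ℝ)) ∧ (((Lof Lbar n : ℝ))^3 ≤ (n:ℝ)^(ε:ℝ)) ∧
      (48 * c ≤ (Lof Lbar n : ℝ)) := by
    filter_upwards [Filter.eventually_ge_atTop 2,
      hcomp.eventually hev1, hcomp.eventually hev2, hcomp.eventually hev3,
      hcomp.eventually hev4, hlogbTop.eventually_ge_atTop (48*c)]
      with n h2 hx1 hx2 hx3 hx4 hx5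
    have hn1 : 1 ≤ n := by omega
    have hn1R : (1:ℝ) ≤ (n:ℝ) := by exact_mod_cast hn1
    have hn0R : (0:ℝ) ≤ (n:ℝ) := by linarith
    have hlogn0 : 0 ≤ Real.log (n:ℝ) := Real.log_nonneg hn1R
    have hLup : (Lof Lbar n : ℝ) ≤ a * Real.log n + 2 := hLle n hn1
    have hL48 : 48 * c ≤ (Lof Lbar n : ℝ) := le_trans hx5 (hLge n)
    have hLpos : (0:ℝ) < (Lof Lbar n : ℝ) := lt_of_lt_of_le (by positivity) hL48
    have hLnat1 : 1 ≤ Lof Lbar n := by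
      have : 0 < Lof Lbar n := by exact_mod_cast hLpos
      omega
    have hL1R : (1:ℝ) ≤ (Lof Lbar n : ℝ) := by exact_mod_cast hLnat1
    have hu0 : (0:ℝ) ≤ a * Real.log n + 2 := by positivity
    -- (i) L ≤ n
    have hLn : Lof Lbar n ≤ n := by
      have hfin : (Lof Lbar n : ℝ) ≤ (n:ℝ) := by
        have hx1' := hx1
        rw [Real.rpow_one, one_mul] at hx1'
        exact le_trans hLup hx1'
      exact_mod_cast hfin
    -- (ii) L² ≤ c n
    have hLsq : ((Lof Lbar n : ℝ))^2 ≤ c * (n:ℝ) := by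
      have hs1 : ((Lof Lbar n : ℝ))^2 ≤ (a * Real.log n + 2)^2 :=
        pow_le_pow_left₀ (by positivity) hLup 2
      have hs2 : (a * Real.log n + 2)^2 ≤ (Real.sqrt c * (n:ℝ)^((1:ℝ)/2))^2 :=
        pow_le_pow_left₀ hu0 hx2 2
      have hs3 : (Real.sqrt c * (n:ℝ)^((1:ℝ)/2))^2 = c * (n:ℝ) := by
        rw [mul_pow, Real.sq_sqrt hc.le]
        congr 1
        rw [← Real.rpow_natCast ((n:ℝ)^((1:ℝ)/2)) 2, ← Real.rpow_mul hn0R]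
        norm_num
      linarith
    -- (iii) L ≤ K
    have hLcnL : (Lof Lbar n : ℝ) ≤ c * (n:ℝ) / (Lof Lbar n : ℝ) := by
      rw [le_div_iff₀ hLpos]
      calc (Lof Lbar n : ℝ) * (Lof Lbar n : ℝ) = ((Lof Lbar n : ℝ))^2 := by ring
        _ ≤ c * (n:ℝ) := hLsq
    have hLK : Lof Lbar n ≤ Kof c Lbar n := by
      have h1 : (Lof Lbar n : ℝ) ≤ (Kof c Lbar n : ℝ) := by
        refine le_trans hLcnL ?_
        rw [Kof]
        exact Nat.le_ceil _
      exact_mod_cast h1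
    -- (iv) K ≤ 2cn/L
    have hcnL1 : (1:ℝ) ≤ c * (n:ℝ) / (Lof Lbar n : ℝ) := le_trans hL1R hLcnL
    have hKle : (Kof c Lbar n : ℝ) ≤ 2*c*(n:ℝ)/(Lof Lbar n : ℝ) := by
      have h1 : (Kof c Lbar n : ℝ) < c * (n:ℝ) / (Lof Lbar n : ℝ) + 1 := by
        rw [Kof]
        exact Nat.ceil_lt_add_one (by positivity)
      have h2 : 2*c*(n:ℝ)/(Lof Lbar n : ℝ) = 2 * (c * (n:ℝ) / (Lof Lbar n : ℝ)) := by
        ring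
      rw [h2]
      linarith
    -- (v) 2L ≤ n^ε
    have h2L : 2 * (Lof Lbar n : ℝ) ≤ (n:ℝ)^(ε:ℝ) := by
      rw [one_mul] at hx3
      linarith
    -- (vi) L³ ≤ n^ε
    have hL3 : ((Lof Lbar n : ℝ))^3 ≤ (n:ℝ)^(ε:ℝ) := by
      rw [one_mul] at hx4
      have hs1 : ((Lof Lbar n : ℝ))^3 ≤ (a * Real.log n + 2)^3 :=
        pow_le_pow_left₀ (by positivity) hLup 3
      have hs2 : (a * Real.log n + 2)^3 ≤ ((n:ℝ)^((ε:ℝ)/3))^3 :=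
        pow_le_pow_left₀ hu0 hx4 3
      have hs3 : ((n:ℝ)^((ε:ℝ)/3))^3 = (n:ℝ)^(ε:ℝ) := by
        rw [← Real.rpow_natCast ((n:ℝ)^((ε:ℝ)/3)) 3, ← Real.rpow_mul hn0R]
        norm_num
      linarith
    exact ⟨h2, hLn, hLK, hKle, h2L, hL3, hL48⟩
  -- squeeze
  apply squeeze_zero' (g := fun n : ℕ => 3 * (2⁻¹:ℝ)^(Lof Lbar n))
  · filter_upwards with n
    by_cases h : 2 ≤ n
    · rw [dif_pos h]; exact ENNReal.toReal_nonneg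
    · rw [dif_neg h]
  · filter_upwards [hevN] with n hn
    obtain ⟨h2, hLn, hLK, hKle, h2L, hL3, hL48⟩ := hn
    rw [dif_pos h2]
    exact SSEB.fixed_n_bound c Lbar δ ε hc hε h2 (model n h2) hLn hLK hKle h2L hL3 hL48
  · have h1 : Tendsto (fun m : ℕ => (2⁻¹:ℝ)^m) atTop (nhds 0) :=
      tendsto_pow_atTop_nhds_zero_of_lt_one (by norm_num) (by norm_num)
    have h2 := ((h1.comp hLofTop).const_mul (3:ℝ))
    simpa using h2
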